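/- arXiv:1812.00274 — 3 statements merged into one kernel-verified Lean document; each statement's English description precedes it below -/
import Mathlib

section
/- Let n ∈ ℕ, let V ⊆ ℝ^n be a set, let d ≥ 1, r ≥ 0, and let T and S be d-tensors over V. If σ(T) = σ(S), then σ(Stk^r(T)) = σ(Stk^r(S)). -/
noncomputable section

/-- The `r`-stack of a `d`-tensor `T` over `α`: `Stk^r(T)(u, w) = T(u)`. -/
def stk {α : Type*} (d r : ℕ) (T : (Fin d → α) → ℝ) : (Fin (d + r) → α) → ℝ :=
  fun v => T fun i => v (Fin.castAdd r i)

/-- The symmetrization of a `d`-tensor: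
`σ(T)(v) = (1/d!) ∑_{π ∈ Sym(d)} T(v ∘ π)`. -/
def tsym {α : Type*} (d : ℕ) (T : (Fin d → α) → ℝ) : (Fin d → α) → ℝ :=
  fun v => (d.factorial : ℝ)⁻¹ * ∑ π : Equiv.Perm (Fin d), T (v ∘ π)

/-- Embed `Perm (Fin d)` into `Perm (Fin (d+r))` acting on the first `d` coordinates. -/
def embPerm (d r : ℕ) (τ : Equiv.Perm (Fin d)) : Equiv.Perm (Fin (d + r)) :=
  (finSumFinEquiv.permCongr (τ.sumCongr (Equiv.refl (Fin r))))

lemma embPerm_castAdd (d r : ℕ) (τ : Equiv.Perm (Fin d)) (i : Fin d) :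
    embPerm d r τ (Fin.castAdd r i) = Fin.castAdd r (τ i) := by
  simp [embPerm, Equiv.permCongr_apply]

lemma key (α : Type*) (d r : ℕ) (U : (Fin d → α) → ℝ) (v : Fin (d + r) → α) :
    (d.factorial : ℝ) * ∑ π : Equiv.Perm (Fin (d + r)), U (fun i => v (π (Fin.castAdd r i)))
      = ∑ π : Equiv.Perm (Fin (d + r)), ∑ τ : Equiv.Perm (Fin d),
          U (fun i => v (π (Fin.castAdd r (τ i)))) := by
  rw [Finset.sum_comm]
  have : ∀ τ : Equiv.Perm (Fin d),
      ∑ π : Equiv.Perm (Fin (d + r)), U (fun i => v (π (Fin.castAdd r (τ i))))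
        = ∑ π : Equiv.Perm (Fin (d + r)), U (fun i => v (π (Fin.castAdd r i))) := by
    intro τ
    refine Fintype.sum_equiv (Equiv.mulRight (embPerm d r τ)) _ _ ?_
    intro π
    congr 1
    funext i
    simp [Equiv.Perm.mul_apply, embPerm_castAdd]
  simp only [this, Finset.sum_const, Finset.card_univ, Fintype.card_perm, nsmul_eq_mul]
  simp [Fintype.card_fin, mul_comm]

/-- if `σ(T) = σ(S)` then `σ(Stk^r T) = σ(Stk^r S)`. -/
theorem stmt0 (n : ℕ) (V : Set (Fin n → ℝ)) (d r : ℕ) (hd : 1 ≤ d)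
    (T S : (Fin d → V) → ℝ)
    (h : tsym d T = tsym d S) :
    tsym (d + r) (stk d r T) = tsym (d + r) (stk d r S) := by
  funext v
  unfold tsym stk
  congr 1
  have hfac : (d.factorial : ℝ) ≠ 0 := Nat.cast_ne_zero.mpr (Nat.factorial_ne_zero d)
  have hsum : ∀ w : Fin d → V,
      ∑ τ : Equiv.Perm (Fin d), T (w ∘ τ) = ∑ τ : Equiv.Perm (Fin d), S (w ∘ τ) := by
    intro w
    have := congrFun h w
    unfold tsym at this
    field_simp at this
    exact this
  have hT := key V d r T v
  have hS := key V d r S v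
  have : (d.factorial : ℝ) * ∑ π : Equiv.Perm (Fin (d + r)),
      T (fun i => v (π (Fin.castAdd r i))) = (d.factorial : ℝ) *
      ∑ π : Equiv.Perm (Fin (d + r)), S (fun i => v (π (Fin.castAdd r i))) := by
    rw [hT, hS]
    refine Finset.sum_congr rfl fun π _ => ?_
    exact hsum (fun i => v (π (Fin.castAdd r i)))
  have := mul_left_cancel₀ hfac this
  exact this
end
end

section
/- For every n ≥ 1, every r ∈ ℕ and every symmetric matrix M ∈ S^n, the following are equivalent: (i) there exist symmetric n×n matrices N_β with all entries nonnegative and symmetric positive semidefinite n×n matrices S_β, indexed by β ∈ ℕ^n with |β| = β_1+⋯+β_n = r, such that (∑_{i=1}^n x_i)^r (∑_{i,j} M_{ij} x_i x_j) = ∑_{|β|=r} x^β (xᵀ N_β x) + ∑_{|β|=r} x^β (xᵀ S_β x) as polynomials in x_1,…,x_n, where x^β := x_1^{β_1}⋯x_n^{β_n}; (ii) there exist a nonnegative (r+2)-tensor N over [n] and a 2-PSD (r+2)-tensor S over [n] such that σ(Stk^r(M)) = σ(N) + σ(S). In other words, Q_r^n = Q_r^{[n]}. -/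
noncomputable section

open MvPolynomial

/-- A symmetric `n × n` matrix identified with a `2`-tensor over `[n]`. -/
def matTensor {n : ℕ} (M : Matrix (Fin n) (Fin n) ℝ) : (Fin 2 → Fin n) → ℝ :=
  fun v => M (v 0) (v 1)

/-- An `(r+2)`-tensor `S` over `[n]` is 2-PSD if for every `z ∈ [n]^r` the
matrix `(i,j) ↦ S(i,j,z)` is symmetric positive semidefinite. -/
def Is2PSDFin {n r : ℕ} (S : (Fin (2 + r) → Fin n) → ℝ) : Prop :=
  ∀ z : Fin r → Fin n,
    Matrix.PosSemidef (Matrix.of fun i j : Fin n => S (Fin.append ![i, j] z))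

namespace StmtAux

variable {n : ℕ}


variable {n : ℕ}

def deg {d : ℕ} (v : Fin d → Fin n) : Fin n →₀ ℕ := ∑ k, Finsupp.single (v k) 1

def pol (d : ℕ) (T : (Fin d → Fin n) → ℝ) : MvPolynomial (Fin n) ℝ :=
  ∑ v : Fin d → Fin n, C (T v) * ∏ k, X (v k)

lemma prod_monomial {ι : Type*} (s : Finset ι) (f : ι → (Fin n →₀ ℕ)) :
    ∏ i ∈ s, (monomial (f i) (1:ℝ)) = monomial (∑ i ∈ s, f i) 1 := by
  classical
  induction s using Finset.cons_induction with
  | empty => simp [monomial_zero']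
  | cons a s ha ih =>
    rw [Finset.prod_cons, Finset.sum_cons, ih, monomial_mul, one_mul]

lemma prod_X_eq {d : ℕ} (v : Fin d → Fin n) :
    (∏ k, (X (v k) : MvPolynomial (Fin n) ℝ)) = monomial (deg v) 1 := by
  rw [deg, ← prod_monomial]
  exact Finset.prod_congr rfl fun k _ => rfl

lemma coeff_pol {d : ℕ} (T : (Fin d → Fin n) → ℝ) (m : Fin n →₀ ℕ) :
    (pol d T).coeff m = ∑ v ∈ Finset.univ.filter (fun v => deg v = m), T v := by
  rw [pol]
  simp only [prod_X_eq, C_mul_monomial, mul_one]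
  rw [Finset.sum_filter]
  simp [coeff_sum, coeff_monomial]

lemma deg_comp {d : ℕ} (v : Fin d → Fin n) (π : Equiv.Perm (Fin d)) :
    deg (v ∘ π) = deg v := by
  rw [deg, deg]
  exact Equiv.sum_comp π (fun k => Finsupp.single (v k) 1)

lemma card_fiber {d : ℕ} (v : Fin d → Fin n) (a : Fin n) :
    Fintype.card {k // v k = a} = deg v a := by
  rw [Fintype.card_subtype, deg]
  rw [Finsupp.finset_sum_apply]
  simp only [Finsupp.single_apply]
  rw [Finset.card_filter]

lemma exists_perm_of_deg_eq {d : ℕ} {v w : Fin d → Fin n} (h : deg v = deg w) :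
    ∃ π : Equiv.Perm (Fin d), v ∘ π = w := by
  have e : ∀ a, {k // w k = a} ≃ {k // v k = a} := fun a =>
    Fintype.equivOfCardEq (by rw [card_fiber, card_fiber, h])
  exact ⟨Equiv.ofFiberEquiv e, funext fun k => Equiv.ofFiberEquiv_map e k⟩

section withTsym


lemma card_stab_eq {d : ℕ} (v w : Fin d → Fin n) (h : deg w = deg v) :
    (Finset.univ.filter fun π : Equiv.Perm (Fin d) => v ∘ π = w).card =
      (Finset.univ.filter fun π : Equiv.Perm (Fin d) => v ∘ π = v).card := by
  classical
  obtain ⟨π0, hπ0⟩ := exists_perm_of_deg_eq h.symm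
  apply Finset.card_bij' (fun π _ => π * π0⁻¹) (fun σ _ => σ * π0)
  · intro π hπ
    simp only [Finset.mem_filter, Finset.mem_univ, true_and] at hπ ⊢
    funext k
    simp only [Equiv.Perm.coe_mul, Function.comp_apply]
    have : v (π (π0⁻¹ k)) = w (π0⁻¹ k) := congrFun hπ _
    rw [this, ← hπ0]
    simp
  · intro σ hσ
    simp only [Finset.mem_filter, Finset.mem_univ, true_and] at hσ ⊢
    funext k
    simp only [Equiv.Perm.coe_mul, Function.comp_apply]
    have : v (σ (π0 k)) = v (π0 k) := congrFun hσ _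
    rw [this, ← hπ0]
    rfl
  · intro π _; group
  · intro σ _; group

lemma sum_perm_eq_coeff {d : ℕ} (T : (Fin d → Fin n) → ℝ) (v : Fin d → Fin n) :
    ∑ π : Equiv.Perm (Fin d), T (v ∘ π) =
      ((Finset.univ.filter fun π : Equiv.Perm (Fin d) => v ∘ π = v).card : ℝ) *
        (pol d T).coeff (deg v) := by
  classical
  rw [coeff_pol]
  rw [← Finset.sum_fiberwise_of_maps_to (g := fun π : Equiv.Perm (Fin d) => v ∘ π)
      (t := Finset.univ.filter fun w => deg w = deg v)
      (fun π _ => by simp [deg_comp]) (fun π => T (v ∘ π))]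
  rw [Finset.mul_sum]
  refine Finset.sum_congr rfl fun w hw => ?_
  simp only [Finset.mem_filter, Finset.mem_univ, true_and] at hw
  have : ∀ π ∈ Finset.univ.filter fun π : Equiv.Perm (Fin d) => v ∘ π = w,
      T (v ∘ π) = T w := fun π hπ => by
    simp only [Finset.mem_filter, Finset.mem_univ, true_and] at hπ
    rw [hπ]
  rw [Finset.sum_congr rfl this, Finset.sum_const, card_stab_eq v w hw,
    nsmul_eq_mul]

lemma tsym_eq_of_pol_eq {d : ℕ} {T T' : (Fin d → Fin n) → ℝ}
    (h : pol d T = pol d T') : tsym d T = tsym d T' := by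
  funext v
  rw [tsym, tsym]
  congr 1
  rw [sum_perm_eq_coeff, sum_perm_eq_coeff, h]

lemma pol_tsym {d : ℕ} (T : (Fin d → Fin n) → ℝ) :
    pol d (tsym d T) = pol d T := by
  classical
  have key : ∀ π : Equiv.Perm (Fin d),
      (∑ v : Fin d → Fin n, C (T (v ∘ π)) * ∏ k, X (v k)) = pol d T := by
    intro π
    rw [pol]
    refine (Fintype.sum_bijective (fun u : Fin d → Fin n => u ∘ ⇑π.symm)
      (Equiv.arrowCongr π (Equiv.refl (Fin n))).bijective _ _ fun u => ?_).symm
    have h1 : (u ∘ ⇑π.symm) ∘ ⇑π = u := by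
      funext k; simp
    rw [h1]
    congr 1
    exact (Equiv.prod_comp π.symm fun k => (X (u k) : MvPolynomial (Fin n) ℝ)).symm
  calc pol d (tsym d T)
      = ∑ v : Fin d → Fin n, ∑ π : Equiv.Perm (Fin d),
          C ((d.factorial : ℝ)⁻¹) * (C (T (v ∘ π)) * ∏ k, X (v k)) := by
        rw [pol]
        refine Finset.sum_congr rfl fun v _ => ?_
        rw [tsym, C_mul, map_sum, Finset.mul_sum, Finset.sum_mul]
        refine Finset.sum_congr rfl fun π _ => by ring
    _ = ∑ π : Equiv.Perm (Fin d), C ((d.factorial : ℝ)⁻¹) * pol d T := by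
        rw [Finset.sum_comm]
        refine Finset.sum_congr rfl fun π _ => ?_
        rw [← Finset.mul_sum, key π]
    _ = pol d T := by
        rw [Finset.sum_const, Finset.card_univ, Fintype.card_perm, Fintype.card_fin,
          nsmul_eq_mul]
        rw [← mul_assoc]
        norm_cast
        rw [← C_eq_coe_nat, ← C_mul, mul_inv_cancel₀ (by
          exact_mod_cast Nat.factorial_ne_zero d), C_1, one_mul]

lemma pol_add {d : ℕ} (T T' : (Fin d → Fin n) → ℝ) :
    pol d (fun v => T v + T' v) = pol d T + pol d T' := by
  rw [pol, pol, pol, ← Finset.sum_add_distrib]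
  exact Finset.sum_congr rfl fun v _ => by rw [C_add, add_mul]

lemma tsym_add {d : ℕ} (T T' : (Fin d → Fin n) → ℝ) :
    tsym d (fun v => T v + T' v) = fun v => tsym d T v + tsym d T' v := by
  funext v
  rw [tsym, tsym, tsym, ← mul_add, ← Finset.sum_add_distrib]

end withTsym

section split
variable {r : ℕ}

def app (i j : Fin n) (z : Fin r → Fin n) : Fin (2 + r) → Fin n := Fin.append ![i, j] z

@[simp] lemma app_left (i j : Fin n) (z : Fin r → Fin n) (t : Fin 2) :
    app i j z (Fin.castAdd r t) = ![i, j] t := Fin.append_left _ _ _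

@[simp] lemma app_right (i j : Fin n) (z : Fin r → Fin n) (k : Fin r) :
    app i j z (Fin.natAdd 2 k) = z k := Fin.append_right _ _ _

def splitEquiv : ((Fin r → Fin n) × Fin n × Fin n) ≃ (Fin (2 + r) → Fin n) where
  toFun p := app p.2.1 p.2.2 p.1
  invFun v := (fun k => v (Fin.natAdd 2 k), v (Fin.castAdd r 0), v (Fin.castAdd r 1))
  left_inv p := by
    obtain ⟨z, i, j⟩ := p
    simp
  right_inv v := by
    funext k
    show app (v (Fin.castAdd r 0)) (v (Fin.castAdd r 1)) (fun k => v (Fin.natAdd 2 k)) k = v k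
    induction k using Fin.addCases with
    | left t =>
      rw [app_left]
      fin_cases t <;> simp
    | right k => rw [app_right]

lemma prod_X_app (i j : Fin n) (z : Fin r → Fin n) :
    (∏ k, (X (app i j z k) : MvPolynomial (Fin n) ℝ)) =
      X i * X j * ∏ k, X (z k) := by
  rw [Fin.prod_univ_add (fun k : Fin (2 + r) => (X (app i j z k) : MvPolynomial (Fin n) ℝ))]
  simp only [app_left, app_right]
  rw [Fin.prod_univ_two]
  simp

lemma pol_split (T : (Fin (2 + r) → Fin n) → ℝ) :
    pol (2 + r) T = ∑ z : Fin r → Fin n, ∑ i, ∑ j,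
      C (T (app i j z)) * (X i * X j * ∏ k, X (z k)) := by
  rw [pol, ← Equiv.sum_comp splitEquiv (fun v => C (T v) * ∏ k, X (v k)),
    Fintype.sum_prod_type]
  refine Finset.sum_congr rfl fun z _ => ?_
  rw [Fintype.sum_prod_type]
  refine Finset.sum_congr rfl fun i _ => Finset.sum_congr rfl fun j _ => ?_
  show C (T (app i j z)) * ∏ k, X (app i j z k) = _
  rw [prod_X_app]

lemma deg_mem_antidiag (z : Fin r → Fin n) :
    deg z ∈ Finset.finsuppAntidiag (Finset.univ : Finset (Fin n)) r := by
  rw [Finset.mem_finsuppAntidiag]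
  refine ⟨?_, Finset.subset_univ _⟩
  have : ∀ a : Fin n, deg z a = ∑ k : Fin r, if z k = a then 1 else 0 := by
    intro a
    rw [deg, Finsupp.finset_sum_apply]
    exact Finset.sum_congr rfl fun k _ => Finsupp.single_apply
  calc ∑ a, deg z a = ∑ a, ∑ k : Fin r, if z k = a then 1 else 0 :=
        Finset.sum_congr rfl fun a _ => this a
    _ = ∑ k : Fin r, ∑ a, if z k = a then 1 else 0 := Finset.sum_comm
    _ = ∑ _k : Fin r, 1 := Finset.sum_congr rfl fun k _ => by
        rw [Finset.sum_ite_eq]; simp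
    _ = r := by simp

lemma pol_eq_sum_antidiag (A : (Fin (2 + r) → Fin n) → ℝ) :
    pol (2 + r) A = ∑ β ∈ Finset.finsuppAntidiag (Finset.univ : Finset (Fin n)) r,
      monomial β 1 * ∑ i, ∑ j,
        C (∑ z ∈ Finset.univ.filter (fun z : Fin r → Fin n => deg z = β),
            A (app i j z)) * X i * X j := by
  classical
  rw [pol_split]
  rw [← Finset.sum_fiberwise_of_maps_to (g := fun z : Fin r → Fin n => deg z)
    (t := Finset.finsuppAntidiag (Finset.univ : Finset (Fin n)) r)
    (fun z _ => deg_mem_antidiag z)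
    (fun z => ∑ i, ∑ j, C (A (app i j z)) * (X i * X j * ∏ k, X (z k)))]
  refine Finset.sum_congr rfl fun β hβ => ?_
  rw [Finset.mul_sum, Finset.sum_comm]
  refine Finset.sum_congr rfl fun i _ => ?_
  rw [Finset.mul_sum, Finset.sum_comm]
  refine Finset.sum_congr rfl fun j _ => ?_
  rw [map_sum, Finset.sum_mul, Finset.sum_mul, Finset.mul_sum]
  refine Finset.sum_congr rfl fun z hz => ?_
  have hz' : deg z = β := (Finset.mem_filter.mp hz).2
  rw [prod_X_eq, hz']
  ring

lemma deg_apply {d : ℕ} (v : Fin d → Fin n) (a : Fin n) :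
    deg v a = ∑ k : Fin d, if v k = a then 1 else 0 := by
  rw [deg, Finsupp.finset_sum_apply]
  exact Finset.sum_congr rfl fun k _ => Finsupp.single_apply

lemma deg_eq_toFinsupp {d : ℕ} (v : Fin d → Fin n) :
    deg v = (Multiset.map v Finset.univ.val).toFinsupp := by
  classical
  ext a
  rw [Multiset.toFinsupp_apply, Multiset.count_map, deg_apply]
  have : (Finset.univ.val.filter fun k => a = v k)
      = (Finset.univ.filter fun k => a = v k).val := by
    rw [Finset.filter_val]
  rw [this, ← Finset.card_def, Finset.card_filter]
  exact Finset.sum_congr rfl fun k _ => if_congr eq_comm rfl rfl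

lemma exists_deg {β : Fin n →₀ ℕ} (hβ : ∑ a, β a = r) :
    ∃ z : Fin r → Fin n, deg z = β := by
  classical
  have hcard : Multiset.card (Finsupp.toMultiset β) = r := by
    rw [Finsupp.card_toMultiset, Finsupp.sum_fintype _ _ (fun _ => rfl)]
    exact hβ
  have hlen : (Finsupp.toMultiset β).toList.length = r := by
    rw [Multiset.length_toList, hcard]
  set l := (Finsupp.toMultiset β).toList with hldef
  refine ⟨fun k => l.get (Fin.cast hlen.symm k), ?_⟩
  rw [deg_eq_toFinsupp]
  have h1 : Multiset.map (fun k : Fin r => l.get (Fin.cast hlen.symm k)) Finset.univ.val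
      = (l : Multiset (Fin n)) := by
    rw [Fin.univ_val_map]
    congr 1
    subst hlen
    simp only [Fin.cast_refl]
    exact List.ofFn_get l
  rw [h1, hldef, Multiset.coe_toList, Finsupp.toMultiset_toFinsupp]

lemma psd_smul {A : Matrix (Fin n) (Fin n) ℝ} (hA : A.PosSemidef) {c : ℝ} (hc : 0 ≤ c) :
    (c • A).PosSemidef := by
  refine ⟨?_, ?_⟩
  · have h1 := hA.1
    unfold Matrix.IsHermitian at h1 ⊢
    rw [Matrix.conjTranspose_smul, star_trivial, h1]
  · intro x
    have h := hA.2 x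
    simp only [Matrix.smul_apply, smul_eq_mul, Finsupp.sum] at h ⊢
    have e : (∑ i ∈ x.support, ∑ j ∈ x.support, star (x i) * (c * A i j) * x j)
        = c * ∑ i ∈ x.support, ∑ j ∈ x.support, star (x i) * A i j * x j := by
      rw [Finset.mul_sum]
      refine Finset.sum_congr rfl fun i _ => ?_
      rw [Finset.mul_sum]
      exact Finset.sum_congr rfl fun j _ => by ring
    rw [e]
    exact mul_nonneg hc h

lemma psd_sum {ι : Type*} (s : Finset ι) (f : ι → Matrix (Fin n) (Fin n) ℝ)
    (h : ∀ i ∈ s, (f i).PosSemidef) : (∑ i ∈ s, f i).PosSemidef :=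
  Finset.sum_induction f _ (fun _ _ ha hb => ha.add hb) Matrix.PosSemidef.zero h

lemma quad_swap (c : Fin n → Fin n → ℝ) :
    ∑ i, ∑ j, (C (c j i) * X i * X j : MvPolynomial (Fin n) ℝ)
      = ∑ i, ∑ j, C (c i j) * X i * X j := by
  rw [Finset.sum_comm]
  exact Finset.sum_congr rfl fun i _ => Finset.sum_congr rfl fun j _ => by ring

lemma quad_symmetrize (c : Fin n → Fin n → ℝ) :
    ∑ i, ∑ j, (C ((1/2 : ℝ) * (c i j + c j i)) * X i * X j : MvPolynomial (Fin n) ℝ)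
      = ∑ i, ∑ j, C (c i j) * X i * X j := by
  have step : ∀ i j : Fin n, (C ((1/2 : ℝ) * (c i j + c j i)) * X i * X j : MvPolynomial (Fin n) ℝ)
      = C (1/2 : ℝ) * (C (c i j) * X i * X j) + C (1/2 : ℝ) * (C (c j i) * X i * X j) := by
    intro i j
    rw [C_mul, C_add]
    ring
  calc ∑ i, ∑ j, (C ((1/2 : ℝ) * (c i j + c j i)) * X i * X j : MvPolynomial (Fin n) ℝ)
      = ∑ i, ∑ j, (C (1/2 : ℝ) * (C (c i j) * X i * X j)
          + C (1/2 : ℝ) * (C (c j i) * X i * X j)) :=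
        Finset.sum_congr rfl fun i _ => Finset.sum_congr rfl fun j _ => step i j
    _ = C (1/2 : ℝ) * (∑ i, ∑ j, C (c i j) * X i * X j)
          + C (1/2 : ℝ) * (∑ i, ∑ j, C (c j i) * X i * X j) := by
        simp only [Finset.sum_add_distrib, Finset.mul_sum]
    _ = (C (1/2 : ℝ) + C (1/2 : ℝ)) * (∑ i, ∑ j, C (c i j) * X i * X j) := by
        rw [quad_swap]; ring
    _ = ∑ i, ∑ j, C (c i j) * X i * X j := by
        rw [← C_add]
        norm_num

end split


section final
variable {r : ℕ}

lemma stk_app (M : Matrix (Fin n) (Fin n) ℝ) (i j : Fin n) (z : Fin r → Fin n) :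
    stk 2 r (matTensor M) (app i j z) = M i j := by
  show M (app i j z (Fin.castAdd r 0)) (app i j z (Fin.castAdd r 1)) = M i j
  rw [app_left, app_left]
  simp

lemma pow_sum_X :
    ((∑ i : Fin n, X i : MvPolynomial (Fin n) ℝ)) ^ r
      = ∑ z : Fin r → Fin n, ∏ k, X (z k) := by
  have h1 : ((∑ i : Fin n, X i : MvPolynomial (Fin n) ℝ)) ^ r
      = ∏ _k : Fin r, ∑ i : Fin n, (X i : MvPolynomial (Fin n) ℝ) := by
    rw [Finset.prod_const, Finset.card_univ, Fintype.card_fin]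
  rw [h1, Finset.prod_univ_sum, Fintype.piFinset_univ]

lemma pol_stk (M : Matrix (Fin n) (Fin n) ℝ) :
    pol (2 + r) (stk 2 r (matTensor M)) =
      (∑ i : Fin n, X i) ^ r * (∑ i, ∑ j, C (M i j) * X i * X j) := by
  calc pol (2 + r) (stk 2 r (matTensor M))
      = ∑ z : Fin r → Fin n, ∑ i, ∑ j, C (M i j) * (X i * X j * ∏ k, X (z k)) := by
        rw [pol_split]
        exact Finset.sum_congr rfl fun z _ => Finset.sum_congr rfl fun i _ =>
          Finset.sum_congr rfl fun j _ => by rw [stk_app]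
    _ = ∑ z : Fin r → Fin n, (∏ k, X (z k)) * ∑ i, ∑ j, C (M i j) * X i * X j := by
        refine Finset.sum_congr rfl fun z _ => ?_
        rw [Finset.mul_sum]
        refine Finset.sum_congr rfl fun i _ => ?_
        rw [Finset.mul_sum]
        exact Finset.sum_congr rfl fun j _ => by ring
    _ = _ := by rw [← Finset.sum_mul, ← pow_sum_X]

def tensorize (B : (Fin n →₀ ℕ) → Matrix (Fin n) (Fin n) ℝ) :
    (Fin (2 + r) → Fin n) → ℝ :=
  fun v => B (deg fun k => v (Fin.natAdd 2 k)) (v (Fin.castAdd r 0)) (v (Fin.castAdd r 1))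
    / ((Finset.univ.filter fun z : Fin r → Fin n =>
        deg z = deg fun k => v (Fin.natAdd 2 k)).card : ℝ)

lemma tensorize_app (B : (Fin n →₀ ℕ) → Matrix (Fin n) (Fin n) ℝ)
    (i j : Fin n) (z : Fin r → Fin n) :
    tensorize B (app i j z) = B (deg z) i j /
      ((Finset.univ.filter fun z' : Fin r → Fin n => deg z' = deg z).card : ℝ) := by
  unfold tensorize
  have h1 : (fun k => app i j z (Fin.natAdd 2 k)) = z := funext fun k => app_right i j z k
  have h2 : app i j z (Fin.castAdd r 0) = i := by rw [app_left]; simp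
  have h3 : app i j z (Fin.castAdd r 1) = j := by rw [app_left]; simp
  rw [h1, h2, h3]

lemma fiber_card_ne_zero {β : Fin n →₀ ℕ}
    (hβ : β ∈ Finset.finsuppAntidiag (Finset.univ : Finset (Fin n)) r) :
    ((Finset.univ.filter fun z : Fin r → Fin n => deg z = β).card : ℝ) ≠ 0 := by
  have hsum : ∑ a, β a = r := (Finset.mem_finsuppAntidiag.mp hβ).1
  obtain ⟨z0, hz0⟩ := exists_deg hsum
  have : z0 ∈ Finset.univ.filter fun z : Fin r → Fin n => deg z = β :=
    Finset.mem_filter.mpr ⟨Finset.mem_univ _, hz0⟩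
  exact Nat.cast_ne_zero.mpr (Finset.card_ne_zero_of_mem this)

lemma pol_tensorize (B : (Fin n →₀ ℕ) → Matrix (Fin n) (Fin n) ℝ) :
    pol (2 + r) (tensorize B) =
      ∑ β ∈ Finset.finsuppAntidiag (Finset.univ : Finset (Fin n)) r,
        monomial β 1 * ∑ i, ∑ j, C (B β i j) * X i * X j := by
  rw [pol_eq_sum_antidiag]
  refine Finset.sum_congr rfl fun β hβ => ?_
  congr 1
  refine Finset.sum_congr rfl fun i _ => Finset.sum_congr rfl fun j _ => ?_
  have key : ∑ z ∈ Finset.univ.filter (fun z : Fin r → Fin n => deg z = β),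
      tensorize B (app i j z) = B β i j := by
    have hc := fiber_card_ne_zero (n := n) hβ
    calc ∑ z ∈ Finset.univ.filter (fun z : Fin r → Fin n => deg z = β),
        tensorize B (app i j z)
        = ∑ _z ∈ Finset.univ.filter (fun z : Fin r → Fin n => deg z = β),
            B β i j / ((Finset.univ.filter
              fun z : Fin r → Fin n => deg z = β).card : ℝ) := by
          refine Finset.sum_congr rfl fun z hz => ?_
          have hzβ : deg z = β := (Finset.mem_filter.mp hz).2
          rw [tensorize_app, hzβ]
      _ = B β i j := by
          rw [Finset.sum_const, nsmul_eq_mul, mul_comm, div_mul_cancel₀ _ hc]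
  rw [key]

lemma tensorize_nonneg (B : (Fin n →₀ ℕ) → Matrix (Fin n) (Fin n) ℝ)
    (hB : ∀ β ∈ Finset.finsuppAntidiag (Finset.univ : Finset (Fin n)) r,
      ∀ i j, 0 ≤ B β i j) (v : Fin (2 + r) → Fin n) : 0 ≤ tensorize B v := by
  unfold tensorize
  exact div_nonneg (hB _ (deg_mem_antidiag _) _ _) (Nat.cast_nonneg _)

lemma tensorize_psd (B : (Fin n →₀ ℕ) → Matrix (Fin n) (Fin n) ℝ)
    (hB : ∀ β ∈ Finset.finsuppAntidiag (Finset.univ : Finset (Fin n)) r,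
      (B β).PosSemidef) : Is2PSDFin (n := n) (r := r) (tensorize (r := r) B) := by
  intro z
  have heq : (Matrix.of fun i j : Fin n => tensorize B (Fin.append ![i, j] z))
      = ((Finset.univ.filter fun z' : Fin r → Fin n => deg z' = deg z).card : ℝ)⁻¹
          • B (deg z) := by
    ext i j
    show tensorize B (app i j z) = _
    rw [tensorize_app, Matrix.smul_apply, smul_eq_mul, div_eq_inv_mul]
  rw [heq]
  exact psd_smul (hB _ (deg_mem_antidiag z)) (by positivity)

def symmetrizeMat (A : (Fin (2 + r) → Fin n) → ℝ) (β : Fin n →₀ ℕ) :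
    Matrix (Fin n) (Fin n) ℝ :=
  Matrix.of fun i j => (1/2 : ℝ) *
    ∑ z ∈ Finset.univ.filter (fun z : Fin r → Fin n => deg z = β),
      (A (app i j z) + A (app j i z))

lemma symmetrizeMat_isSymm (A : (Fin (2 + r) → Fin n) → ℝ) (β : Fin n →₀ ℕ) :
    (symmetrizeMat A β).IsSymm := by
  unfold Matrix.IsSymm
  ext i j
  show symmetrizeMat A β j i = symmetrizeMat A β i j
  unfold symmetrizeMat
  simp only [Matrix.of_apply]
  congr 1
  exact Finset.sum_congr rfl fun z _ => add_comm _ _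

lemma symmetrizeMat_nonneg (A : (Fin (2 + r) → Fin n) → ℝ) (hA : ∀ v, 0 ≤ A v)
    (β : Fin n →₀ ℕ) (i j : Fin n) : 0 ≤ symmetrizeMat A β i j := by
  unfold symmetrizeMat
  exact mul_nonneg (by norm_num)
    (Finset.sum_nonneg fun z _ => add_nonneg (hA _) (hA _))

lemma symmetrizeMat_psd (A : (Fin (2 + r) → Fin n) → ℝ) (hA : Is2PSDFin A)
    (β : Fin n →₀ ℕ) : (symmetrizeMat A β).PosSemidef := by
  have heq : symmetrizeMat A β
      = ∑ z ∈ Finset.univ.filter (fun z : Fin r → Fin n => deg z = β),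
          (1/2 : ℝ) • ((Matrix.of fun i j : Fin n => A (app i j z))
            + Matrix.transpose (Matrix.of fun i j : Fin n => A (app i j z))) := by
    ext i j
    simp only [symmetrizeMat, Matrix.of_apply, Matrix.sum_apply, Matrix.smul_apply,
      Matrix.add_apply, Matrix.transpose_apply, smul_eq_mul]
    rw [Finset.mul_sum]
  rw [heq]
  refine psd_sum _ _ fun z _ => psd_smul ((hA z).add (hA z).transpose) (by norm_num)

lemma pol_symmetrize (A : (Fin (2 + r) → Fin n) → ℝ) :
    pol (2 + r) A = ∑ β ∈ Finset.finsuppAntidiag (Finset.univ : Finset (Fin n)) r,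
      monomial β 1 * ∑ i, ∑ j, C (symmetrizeMat A β i j) * X i * X j := by
  rw [pol_eq_sum_antidiag]
  refine Finset.sum_congr rfl fun β hβ => ?_
  congr 1
  have hmat : ∀ i j : Fin n, symmetrizeMat A β i j
      = (1/2 : ℝ) * ((∑ z ∈ Finset.univ.filter (fun z : Fin r → Fin n => deg z = β),
          A (app i j z)) + ∑ z ∈ Finset.univ.filter (fun z : Fin r → Fin n => deg z = β),
          A (app j i z)) := by
    intro i j
    unfold symmetrizeMat
    simp only [Matrix.of_apply]
    rw [Finset.sum_add_distrib]
  calc (∑ i, ∑ j, C (∑ z ∈ Finset.univ.filter (fun z : Fin r → Fin n => deg z = β),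
        A (app i j z)) * X i * X j : MvPolynomial (Fin n) ℝ)
      = ∑ i, ∑ j, C (symmetrizeMat A β i j) * X i * X j := by
        rw [← quad_symmetrize (fun i j => ∑ z ∈ Finset.univ.filter
          (fun z : Fin r → Fin n => deg z = β), A (app i j z))]
        exact Finset.sum_congr rfl fun i _ => Finset.sum_congr rfl fun j _ => by
          rw [hmat]

end final

end StmtAux

/-- `Q_r^n = Q_r^{[n]}`. -/
theorem stmt2 (n : ℕ) (hn : 1 ≤ n) (r : ℕ) (M : Matrix (Fin n) (Fin n) ℝ)
    (hM : M.IsSymm) :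
    (∃ N S : (Fin n →₀ ℕ) → Matrix (Fin n) (Fin n) ℝ,
      (∀ β ∈ Finset.finsuppAntidiag (Finset.univ : Finset (Fin n)) r,
        (N β).IsSymm ∧ (∀ i j, 0 ≤ N β i j) ∧ (S β).PosSemidef) ∧
      (∑ i : Fin n, X i) ^ r *
          (∑ i : Fin n, ∑ j : Fin n, C (M i j) * X i * X j) =
        (∑ β ∈ Finset.finsuppAntidiag (Finset.univ : Finset (Fin n)) r,
          monomial β 1 * ∑ i : Fin n, ∑ j : Fin n, C (N β i j) * X i * X j) +
        ∑ β ∈ Finset.finsuppAntidiag (Finset.univ : Finset (Fin n)) r,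
          monomial β 1 * ∑ i : Fin n, ∑ j : Fin n, C (S β i j) * X i * X j) ↔
    (∃ N S : (Fin (2 + r) → Fin n) → ℝ,
      (∀ v, 0 ≤ N v) ∧ Is2PSDFin S ∧
      tsym (2 + r) (stk 2 r (matTensor M)) =
        fun v => tsym (2 + r) N v + tsym (2 + r) S v) := by
    classical
  constructor
  · rintro ⟨NB, SB, hprop, hpoly⟩
    refine ⟨StmtAux.tensorize NB, StmtAux.tensorize SB, ?_, ?_, ?_⟩
    · exact StmtAux.tensorize_nonneg NB (fun β hβ i j => (hprop β hβ).2.1 i j)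
    · exact StmtAux.tensorize_psd SB (fun β hβ => (hprop β hβ).2.2)
    · have hpol : StmtAux.pol (2 + r) (stk 2 r (matTensor M))
          = StmtAux.pol (2 + r)
              (fun v => StmtAux.tensorize NB v + StmtAux.tensorize SB v) := by
        rw [StmtAux.pol_add, StmtAux.pol_tensorize, StmtAux.pol_tensorize,
          StmtAux.pol_stk]
        exact hpoly
      have h2 := StmtAux.tsym_eq_of_pol_eq hpol
      rw [h2, StmtAux.tsym_add]
  · rintro ⟨Nt, St, hN, hS, heq⟩
    refine ⟨StmtAux.symmetrizeMat Nt, StmtAux.symmetrizeMat St, ?_, ?_⟩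
    · intro β hβ
      exact ⟨StmtAux.symmetrizeMat_isSymm Nt β, StmtAux.symmetrizeMat_nonneg Nt hN β,
        StmtAux.symmetrizeMat_psd St hS β⟩
    · have hpol : StmtAux.pol (2 + r) (stk 2 r (matTensor M))
          = StmtAux.pol (2 + r) Nt + StmtAux.pol (2 + r) St := by
        calc StmtAux.pol (2 + r) (stk 2 r (matTensor M))
            = StmtAux.pol (2 + r) (tsym (2 + r) (stk 2 r (matTensor M))) :=
              (StmtAux.pol_tsym _).symm
          _ = StmtAux.pol (2 + r)
                (fun v => tsym (2 + r) Nt v + tsym (2 + r) St v) := by rw [heq]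
          _ = StmtAux.pol (2 + r) (tsym (2 + r) Nt)
                + StmtAux.pol (2 + r) (tsym (2 + r) St) := StmtAux.pol_add _ _
          _ = _ := by rw [StmtAux.pol_tsym, StmtAux.pol_tsym]
      rw [← StmtAux.pol_stk M, hpol, StmtAux.pol_symmetrize Nt,
        StmtAux.pol_symmetrize St]
end
end

section
/- Let n ∈ ℕ and let V ⊆ ℝ^n be a nonempty compact set. A kernel M on V belongs to int COP(V) if and only if there exists ε > 0 such that for every k ≥ 1, all v_1, …, v_k ∈ V and all x in the standard simplex Δ^k = {x ∈ ℝ^k : x_i ≥ 0 for all i, ∑_{i=1}^k x_i = 1}, one has ∑_{i,j=1}^k M(v_i,v_j) x_i x_j ≥ ε. -/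
noncomputable section

open Filter Topology

/-- A symmetric two-variable function identified with a `2`-tensor. -/
def kerTensor {X : Type*} (K : X → X → ℝ) : (Fin 2 → X) → ℝ :=
  fun v => K (v 0) (v 1)

/-- A kernel: a continuous symmetric real-valued function of two variables. -/
def IsKernel {X : Type*} [TopologicalSpace X] (K : X → X → ℝ) : Prop :=
  Continuous (fun p : X × X => K p.1 p.2) ∧ ∀ x y, K x y = K y x

/-- Positive semidefiniteness of a two-variable function. -/
def IsPSDKernel {X : Type*} (K : X → X → ℝ) : Prop :=
  ∀ (k : ℕ) (v : Fin k → X) (x : Fin k → ℝ),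
    0 ≤ ∑ i, ∑ j, K (v i) (v j) * x i * x j

/-- Copositivity of a two-variable function. -/
def IsCopositiveKernel {X : Type*} (K : X → X → ℝ) : Prop :=
  ∀ (k : ℕ) (v : Fin k → X) (x : Fin k → ℝ), (∀ i, 0 ≤ x i) →
    0 ≤ ∑ i, ∑ j, K (v i) (v j) * x i * x j

/-- An `(r+2)`-tensor `S` is 2-PSD if it is continuous and every slice
`(x, y) ↦ S(x, y, z)` is a PSD kernel. -/
def Is2PSD {X : Type*} [TopologicalSpace X] (r : ℕ)
    (S : (Fin (2 + r) → X) → ℝ) : Prop :=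
  Continuous S ∧ ∀ z : Fin r → X, IsPSDKernel fun x y => S (Fin.append ![x, y] z)

/-- The tensor condition defining `C_r`: `σ(Stk^r M) = σ(N)` for some
nonnegative `(r+2)`-tensor `N`. -/
def CrCond {X : Type*} (r : ℕ) (M : X → X → ℝ) : Prop :=
  ∃ N : (Fin (2 + r) → X) → ℝ, (∀ v, 0 ≤ N v) ∧
    tsym (2 + r) (stk 2 r (kerTensor M)) = tsym (2 + r) N

/-- Membership in `C_r`: a kernel satisfying the `C_r` tensor condition. -/
def memCr {X : Type*} [TopologicalSpace X] (r : ℕ) (M : X → X → ℝ) : Prop :=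
  IsKernel M ∧ CrCond r M

/-- Membership in `Q_r`: a kernel `M` with `σ(Stk^r M) = σ(N) + σ(S)` for some
nonnegative `(r+2)`-tensor `N` and 2-PSD `(r+2)`-tensor `S`. -/
def memQr {X : Type*} [TopologicalSpace X] (r : ℕ) (M : X → X → ℝ) : Prop :=
  IsKernel M ∧ ∃ N S : (Fin (2 + r) → X) → ℝ, (∀ v, 0 ≤ N v) ∧ Is2PSD r S ∧
    tsym (2 + r) (stk 2 r (kerTensor M)) =
      fun v => tsym (2 + r) N v + tsym (2 + r) S v

/-- The space of kernels on `V`, i.e. symmetric continuous functions on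
`V × V`, with the topology of `C(V × V, ℝ)` (for `V` compact this is the
supremum-norm topology). -/
def KernelSpace {n : ℕ} (V : Set (Fin n → ℝ)) : Type _ :=
  {K : C(↥V × ↥V, ℝ) // ∀ x y, K (x, y) = K (y, x)}

instance {n : ℕ} (V : Set (Fin n → ℝ)) : TopologicalSpace (KernelSpace V) :=
  instTopologicalSpaceSubtype

/-- `COP(V)` as a subset of the space of kernels on `V`. -/
def COPSet {n : ℕ} (V : Set (Fin n → ℝ)) : Set (KernelSpace V) :=
  {K | IsCopositiveKernel fun x y => K.1 (x, y)}

lemma aux_sum_sub {k : ℕ} (g : Fin k → Fin k → ℝ) (c : ℝ) (x : Fin k → ℝ) :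
    ∑ i, ∑ j, (g i j - c) * x i * x j
      = (∑ i, ∑ j, g i j * x i * x j) - c * (∑ i, x i)^2 := by
  have h : ∑ i, ∑ j, c * x i * x j = c * (∑ i, x i)^2 := by
    rw [sq, Finset.sum_mul_sum, Finset.mul_sum]
    congr 1; ext i
    rw [Finset.mul_sum]
    congr 1; ext j
    ring
  rw [← h, ← Finset.sum_sub_distrib]
  congr 1; ext i
  rw [← Finset.sum_sub_distrib]
  congr 1; ext j
  ring

/-- a kernel `M` lies in `int COP(V)` iff there is `ε > 0` such
that `∑_{i,j} M(v_i, v_j) x_i x_j ≥ ε` for all `k ≥ 1`, `v ∈ V^k` and `x` in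
the standard simplex `Δ^k`. -/
theorem stmt7 (n : ℕ) (V : Set (Fin n → ℝ)) (hVne : V.Nonempty)
    (hVc : IsCompact V) (M : KernelSpace V) :
    M ∈ interior (COPSet V) ↔
      ∃ ε : ℝ, 0 < ε ∧ ∀ (k : ℕ), 1 ≤ k → ∀ (v : Fin k → ↥V) (x : Fin k → ℝ),
        (∀ i, 0 ≤ x i) → (∑ i, x i = 1) →
        ε ≤ ∑ i, ∑ j, M.1 (v i, v j) * x i * x j := by
  haveI : CompactSpace ↥V := isCompact_iff_compactSpace.mp hVc
  obtain ⟨Mf, hMs⟩ := M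
  constructor
  · intro hM
    erw [mem_interior_iff_mem_nhds, nhds_subtype_eq_comap, Filter.mem_comap] at hM
    obtain ⟨U, hU, hUsub⟩ := hM
    rw [Metric.mem_nhds_iff] at hU
    obtain ⟨ε, hε, hball⟩ := hU
    refine ⟨ε/2, by positivity, ?_⟩
    intro k hk v x hx hs
    set K₀ : KernelSpace V :=
      ⟨Mf - ContinuousMap.const _ (ε/2), by intro a b; simp [hMs a b]⟩ with hK₀def
    have hd : dist (K₀ : KernelSpace V).1 Mf < ε := by
      have h1 : dist (K₀ : KernelSpace V).1 Mf ≤ ε/2 := by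
        rw [ContinuousMap.dist_le (by positivity)]
        intro p
        simp only [hK₀def, ContinuousMap.sub_apply, ContinuousMap.const_apply,
          Real.dist_eq, sub_sub_cancel_left, abs_neg]
        rw [abs_of_nonneg (by positivity)]
      linarith
    have hcop : K₀ ∈ COPSet V := hUsub (hball (Metric.mem_ball.mpr hd))
    have h0 := hcop k v x hx
    have hc : ∀ i j, (K₀ : KernelSpace V).1 (v i, v j) = Mf (v i, v j) - ε/2 := by
      intro i j; simp [hK₀def]
    simp only [hc] at h0
    rw [aux_sum_sub (fun i j => Mf (v i, v j)) (ε/2) x, hs] at h0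
    linarith
  · rintro ⟨ε, hε, hcond⟩
    erw [mem_interior_iff_mem_nhds, nhds_subtype_eq_comap, Filter.mem_comap]
    refine ⟨Metric.ball Mf ε, Metric.ball_mem_nhds _ hε, ?_⟩
    rintro K hK k v x hx
    by_cases hs0 : ∑ i, x i = 0
    · have hx0 : ∀ i, x i = 0 := by
        intro i
        exact (Finset.sum_eq_zero_iff_of_nonneg (fun i _ => hx i)).mp hs0 i
          (Finset.mem_univ i)
      simp [hx0]
    · have hspos : 0 < ∑ i, x i :=
        lt_of_le_of_ne (Finset.sum_nonneg fun i _ => hx i) (Ne.symm hs0)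
      set s := ∑ i, x i with hsdef
      have hk1 : 1 ≤ k := by
        rcases Nat.eq_zero_or_pos k with h | h
        · subst h; simp [hsdef] at hs0
        · exact h
      set y := fun i => x i / s with hy
      have hys : ∑ i, y i = 1 := by
        simp only [hy, ← Finset.sum_div, ← hsdef]
        field_simp
      have hyn : ∀ i, 0 ≤ y i := fun i => div_nonneg (hx i) hspos.le
      have hMy := hcond k hk1 v y hyn hys
      have hKMpt : ∀ i j,
          Mf (v i, v j) - ε ≤ (K : KernelSpace V).1 (v i, v j) := by
        intro i j
        have h1 : dist ((K : KernelSpace V).1 (v i, v j)) (Mf (v i, v j)) < ε :=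
          lt_of_le_of_lt (ContinuousMap.dist_apply_le_dist _) (Metric.mem_ball.mp hK)
        rw [Real.dist_eq] at h1
        have := abs_lt.mp h1
        linarith [this.1]
      have hKy : 0 ≤ ∑ i, ∑ j, (K : KernelSpace V).1 (v i, v j) * y i * y j := by
        have hterm : ∑ i, ∑ j, (Mf (v i, v j) - ε) * y i * y j
            ≤ ∑ i, ∑ j, (K : KernelSpace V).1 (v i, v j) * y i * y j := by
          refine Finset.sum_le_sum fun i _ => Finset.sum_le_sum fun j _ => ?_
          have : 0 ≤ y i * y j := mul_nonneg (hyn i) (hyn j)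
          calc (Mf (v i, v j) - ε) * y i * y j
              = (Mf (v i, v j) - ε) * (y i * y j) := by ring
            _ ≤ (K : KernelSpace V).1 (v i, v j) * (y i * y j) :=
                mul_le_mul_of_nonneg_right (hKMpt i j) this
            _ = (K : KernelSpace V).1 (v i, v j) * y i * y j := by ring
        rw [aux_sum_sub (fun i j => Mf (v i, v j)) ε y, hys] at hterm
        have := hMy
        nlinarith
      have hxy : ∀ i, x i = s * y i := by
        intro i; rw [hy]; field_simp
      calc (0:ℝ) ≤ s^2 * ∑ i, ∑ j, (K : KernelSpace V).1 (v i, v j) * y i * y j :=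
            mul_nonneg (sq_nonneg s) hKy
        _ = ∑ i, ∑ j, (K : KernelSpace V).1 (v i, v j) * x i * x j := by
            rw [Finset.mul_sum]
            congr 1; ext i
            rw [Finset.mul_sum]
            congr 1; ext j
            rw [hxy i, hxy j]; ring
end
end
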